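/- Let μ, ν ∈ P(ℝ²) with c(x,y) = h(|x₁−y₁|) + h(|x₂−y₂|), h strictly convex nonnegative with h(0)=0, and suppose μ({x₂ = 0}) = 1. Then the optimal cardinal flow is f¹ = ((F⁻¹_{μ₁}, F⁻¹_{ν₁})_# L_{[0,1]}) ⊗ δ₀ and f² = (δ₀ ⊗ (F⁻¹_{ν_{|y₁}})_# L_{[0,1]}) ⊗ ν₁, and W_c(μ,ν) = W_{c₁}(μ₁,ν₁) + ∫_ℝ W_{c₂}(δ₀, ν_{|y₁}) dν₁(y₁). -/

import Mathlib

open MeasureTheory ProbabilityTheory Set Filter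
open scoped ENNReal ProbabilityTheory Topology

noncomputable section

variable {X₁ X₂ Y₁ Y₂ : Type*} [MeasurableSpace X₁] [MeasurableSpace X₂]
  [MeasurableSpace Y₁] [MeasurableSpace Y₂]

/-- `π` is a transportation plan (coupling) between `μ` and `ν`. -/
def IsCoupling {A B : Type*} [MeasurableSpace A] [MeasurableSpace B]
    (π : Measure (A × B)) (μ : Measure A) (ν : Measure B) : Prop :=
  π.map Prod.fst = μ ∧ π.map Prod.snd = ν

/-- The minimal transportation (Wasserstein) cost for the cost `c`. -/
noncomputable def Wc {A B : Type*} [MeasurableSpace A] [MeasurableSpace B]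
    (c : A → B → ℝ≥0∞) (μ : Measure A) (ν : Measure B) : ℝ≥0∞ :=
  ⨅ π ∈ {π : Measure (A × B) | IsCoupling π μ ν}, ∫⁻ p, c p.1 p.2 ∂π

/-- `(f1, f2)` is a cardinal flow between `μ ∈ P(X₁ × X₂)` and `ν ∈ P(Y₁ × Y₂)`:
the marginal of `f1` on `X = X₁ × X₂` is `μ`, the marginal of `f2` on `Y = Y₁ × Y₂` is `ν`,
and `f1`, `f2` have the same marginal on `Y₁ × X₂`. -/
def IsCardinalFlow (μ : Measure (X₁ × X₂)) (ν : Measure (Y₁ × Y₂))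
    (f1 : Measure ((X₁ × X₂) × Y₁)) (f2 : Measure (X₂ × (Y₁ × Y₂))) : Prop :=
  f1.map Prod.fst = μ ∧ f2.map Prod.snd = ν ∧
    f1.map (fun p => (p.2, p.1.2)) = f2.map (fun p => (p.2.1, p.1))

/-- The set of cardinal flows between `μ` and `ν`. -/
def Flows (μ : Measure (X₁ × X₂)) (ν : Measure (Y₁ × Y₂)) :
    Set (Measure ((X₁ × X₂) × Y₁) × Measure (X₂ × (Y₁ × Y₂))) :=
  {F | IsProbabilityMeasure F.1 ∧ IsProbabilityMeasure F.2 ∧ IsCardinalFlow μ ν F.1 F.2}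

/-- The cardinal flow functional `CT(f¹,f²) = ∫ c₁ df¹ + ∫ c₂ df²`. -/
noncomputable def CT (c₁ : X₁ → Y₁ → ℝ≥0∞) (c₂ : X₂ → Y₂ → ℝ≥0∞)
    (F : Measure ((X₁ × X₂) × Y₁) × Measure (X₂ × (Y₁ × Y₂))) : ℝ≥0∞ :=
  ∫⁻ q, c₁ q.1.1 q.2 ∂F.1 + ∫⁻ q, c₂ q.1 q.2.2 ∂F.2

/-- `ζ` is a pivot measure between `μ` and `ν` for the separable cost `c₁ + c₂`:
some optimal cardinal flow glues on `ζ`. -/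
def IsPivot (μ : Measure (X₁ × X₂)) (ν : Measure (Y₁ × Y₂))
    (c₁ : X₁ → Y₁ → ℝ≥0∞) (c₂ : X₂ → Y₂ → ℝ≥0∞) (ζ : Measure (Y₁ × X₂)) : Prop :=
  ∃ F ∈ Flows μ ν, F.1.map (fun p => (p.2, p.1.2)) = ζ ∧
    CT c₁ c₂ F = ⨅ G ∈ Flows μ ν, CT c₁ c₂ G

/-- Pseudo-inverse (quantile function) of the cumulative distribution function. -/
noncomputable def qf (m : Measure ℝ) (s : ℝ) : ℝ := sInf {x : ℝ | s ≤ cdf m x}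


variable (m : Measure ℝ) [IsProbabilityMeasure m]

lemma qf_le_iff {s x : ℝ} (hs0 : 0 < s) (hs1 : s < 1) : qf m s ≤ x ↔ s ≤ cdf m x := by
  have hbdd : BddBelow {z : ℝ | s ≤ cdf m z} := by
    obtain ⟨w, hw⟩ : ∃ w, cdf m w < s :=
      ((tendsto_cdf_atBot m).eventually (eventually_lt_nhds hs0)).exists
    refine ⟨w, fun z hz => ?_⟩
    by_contra hzw
    exact absurd (le_trans hz ((monotone_cdf m) (le_of_lt (not_le.mp hzw)))) (not_le.mpr hw)
  have hne : {z : ℝ | s ≤ cdf m z}.Nonempty :=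
    ((tendsto_cdf_atTop m).eventually (eventually_ge_nhds hs1)).exists
  constructor
  · intro hle
    have hq : s ≤ cdf m (qf m s) := by
      have hev : ∀ᶠ z in 𝓝[>] (qf m s), s ≤ cdf m z := by
        filter_upwards [self_mem_nhdsWithin] with z hz
        obtain ⟨w, hw, hwz⟩ := (csInf_lt_iff hbdd hne).mp hz
        exact le_trans hw ((monotone_cdf m) hwz.le)
      have htd : Tendsto (cdf m) (𝓝[>] (qf m s)) (𝓝 (cdf m (qf m s))) :=
        ((cdf m).right_continuous (qf m s)).mono_left (nhdsWithin_mono _ Ioi_subset_Ici_self)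
      exact ge_of_tendsto htd hev
    exact hq.trans ((monotone_cdf m) hle)
  · intro hcdf
    exact csInf_le hbdd hcdf

lemma vol_inter_Icc_eq (A : Set ℝ) {c : ℝ} (hc0 : 0 ≤ c) (hc1 : c ≤ 1)
    (hA : ∀ s ∈ Ioo (0:ℝ) 1, (s ∈ A ↔ s ≤ c)) :
    volume (A ∩ Icc (0:ℝ) 1) = ENNReal.ofReal c := by
  have h1 : A ∩ Ioo (0:ℝ) 1 = Iic c ∩ Ioo (0:ℝ) 1 := by
    ext s
    simp only [mem_inter_iff, mem_Iic, and_congr_left_iff]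
    intro hs
    exact hA s hs
  have hnull : volume ({(0:ℝ), 1} : Set ℝ) = 0 :=
    ((Set.finite_singleton (1:ℝ)).insert 0).measure_zero _
  have key : volume (A ∩ Icc (0:ℝ) 1) = volume (A ∩ Ioo (0:ℝ) 1) := by
    refine le_antisymm ?_ (measure_mono (inter_subset_inter_right _ Ioo_subset_Icc_self))
    have hsub : A ∩ Icc (0:ℝ) 1 ⊆ (A ∩ Ioo (0:ℝ) 1) ∪ {(0:ℝ), 1} := by
      rintro s ⟨hsA, hs0, hs1⟩
      by_cases h : s ∈ Ioo (0:ℝ) 1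
      · exact Or.inl ⟨hsA, h⟩
      · simp only [mem_Ioo, not_and_or, not_lt] at h
        rcases h with h | h
        · exact Or.inr (Or.inl (le_antisymm h hs0))
        · exact Or.inr (Or.inr (le_antisymm hs1 h))
    calc volume (A ∩ Icc (0:ℝ) 1) ≤ volume ((A ∩ Ioo (0:ℝ) 1) ∪ {(0:ℝ), 1}) := measure_mono hsub
    _ ≤ volume (A ∩ Ioo (0:ℝ) 1) + volume ({(0:ℝ), 1} : Set ℝ) := measure_union_le _ _
    _ = volume (A ∩ Ioo (0:ℝ) 1) := by rw [hnull, add_zero]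
  rw [key, h1]
  rcases lt_or_eq_of_le hc1 with hc | hc
  · have : Iic c ∩ Ioo (0:ℝ) 1 = Ioc 0 c := by
      ext s
      simp only [mem_inter_iff, mem_Iic, mem_Ioo, mem_Ioc]
      constructor
      · rintro ⟨h1, h2, _⟩; exact ⟨h2, h1⟩
      · rintro ⟨h1, h2⟩; exact ⟨h2, h1, lt_of_le_of_lt h2 hc⟩
    rw [this, Real.volume_Ioc, sub_zero]
  · have : Iic c ∩ Ioo (0:ℝ) 1 = Ioo 0 1 := by
      refine inter_eq_self_of_subset_right (fun s hs => ?_)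
      exact mem_Iic.mpr (hc ▸ hs.2.le)
    rw [this, Real.volume_Ioo, ← hc, sub_zero]

lemma aemeasurable_qf : AEMeasurable (qf m) (volume.restrict (Icc (0:ℝ) 1)) := by
  classical
  set G : ℝ → ℝ := fun s => if s ∈ Ioo (0:ℝ) 1 then qf m s else 0 with hGdef
  have hG : Measurable G := by
    apply measurable_of_Iic
    intro y
    have hpre : G ⁻¹' Iic y =
        (Ioo (0:ℝ) 1 ∩ Iic (cdf m y)) ∪ ((Ioo (0:ℝ) 1)ᶜ ∩ (if (0:ℝ) ≤ y then univ else ∅)) := by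
      ext s
      by_cases hs : s ∈ Ioo (0:ℝ) 1
      · simp only [mem_preimage, mem_Iic, hGdef, if_pos hs, mem_union, mem_inter_iff, hs,
          mem_compl_iff, not_true_eq_false, false_and, or_false, true_and]
        exact qf_le_iff m hs.1 hs.2
      · simp only [mem_preimage, mem_Iic, hGdef, if_neg hs, mem_union, mem_inter_iff, hs,
          false_and, false_or, mem_compl_iff, not_false_eq_true, true_and]
        by_cases hy : (0:ℝ) ≤ y <;> simp [hy]
    rw [hpre]
    refine MeasurableSet.union (measurableSet_Ioo.inter measurableSet_Iic)
      (measurableSet_Ioo.compl.inter ?_)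
    split <;> simp
  refine ⟨G, hG, ?_⟩
  have hnull : (volume.restrict (Icc (0:ℝ) 1)) ((Ioo (0:ℝ) 1)ᶜ) = 0 := by
    rw [Measure.restrict_apply measurableSet_Ioo.compl]
    refine measure_mono_null (fun s hs => ?_)
      (((Set.finite_singleton (1:ℝ)).insert 0).measure_zero volume)
    obtain ⟨hs1, hs2⟩ := hs
    simp only [mem_compl_iff, mem_Ioo, not_and_or, not_lt] at hs1
    rcases hs1 with h | h
    · exact Or.inl (le_antisymm h hs2.1)
    · exact Or.inr (le_antisymm hs2.2 h)
  refine (ae_iff.mpr (measure_mono_null (fun s hs => ?_) hnull))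
  simp only [mem_setOf_eq] at hs
  by_contra hcon
  simp only [mem_compl_iff, not_not] at hcon
  exact hs (by simp [hGdef, hcon.1, hcon.2])

lemma map_qf : (volume.restrict (Icc (0:ℝ) 1)).map (qf m) = m := by
  have hae := aemeasurable_qf m
  haveI : IsProbabilityMeasure (volume.restrict (Icc (0:ℝ) 1)) :=
    ⟨by simp [Real.volume_Icc]⟩
  haveI : IsProbabilityMeasure ((volume.restrict (Icc (0:ℝ) 1)).map (qf m)) :=
    Measure.isProbabilityMeasure_map hae
  refine Measure.ext_of_Iic _ m (fun x => ?_)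
  rw [Measure.map_apply_of_aemeasurable hae measurableSet_Iic,
    Measure.restrict_apply' measurableSet_Icc, ← ofReal_cdf m x]
  exact vol_inter_Icc_eq (qf m ⁻¹' Iic x) (cdf_nonneg m x) (cdf_le_one m x)
    (fun s hs => by simp only [mem_preimage, mem_Iic]; exact qf_le_iff m hs.1 hs.2)


/-- chord slope of `g` over `[jδ, (j+1)δ]`. -/
noncomputable def sig (g : ℝ → ℝ) (δ : ℝ) (j : ℕ) : ℝ := (g ((j+1)*δ) - g (j*δ)) / δ

/-- brick coefficients. -/
noncomputable def br (g : ℝ → ℝ) (δ : ℝ) : ℕ → ℝ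
  | 0 => sig g δ 0
  | (j+1) => sig g δ (j+1) - sig g δ j

variable {g : ℝ → ℝ} {δ : ℝ}

section hyps
variable (hg : ConvexOn ℝ Set.univ g) (hmono : Monotone g) (hneg : ∀ u ≤ 0, g u = 0)
  (hδ : 0 < δ)

include hmono hδ in
lemma sig_nonneg (j : ℕ) : 0 ≤ sig g δ j := by
  apply div_nonneg _ hδ.le
  have : (j:ℝ)*δ ≤ ((j:ℝ)+1)*δ := by nlinarith
  linarith [hmono this]

include hg hδ in
lemma sig_mono (j : ℕ) : sig g δ j ≤ sig g δ (j+1) := by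
  have h := hg.slope_mono_adjacent (x := (j:ℝ)*δ) (y := ((j:ℝ)+1)*δ) (z := (((j:ℝ)+1)+1)*δ)
    (Set.mem_univ _) (Set.mem_univ _) (by nlinarith) (by nlinarith)
  have e1 : ((j:ℝ)+1)*δ - (j:ℝ)*δ = δ := by ring
  have e2 : (((j:ℝ)+1)+1)*δ - ((j:ℝ)+1)*δ = δ := by ring
  rw [e1, e2] at h
  simp only [sig, Nat.cast_add, Nat.cast_one]
  exact h

include hg hmono hδ in
lemma br_nonneg (j : ℕ) : 0 ≤ br g δ j := by
  cases j with
  | zero => exact sig_nonneg hmono hδ 0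
  | succ i => exact sub_nonneg.mpr (sig_mono hg hδ i)

include hneg hδ in
lemma sum_sig (M : ℕ) : δ * ∑ j ∈ Finset.range M, sig g δ j = g ((M:ℝ)*δ) := by
  induction M with
  | zero => simp [hneg 0 le_rfl]
  | succ M ih =>
    rw [Finset.sum_range_succ, mul_add, ih, sig, mul_div_cancel₀ _ hδ.ne']
    push_cast
    ring_nf

include hneg hδ in
lemma CF (M : ℕ) (u : ℝ) (hu : (M:ℝ)*δ ≤ u) :
    ∑ j ∈ Finset.range (M+1), br g δ j * max (u - (j:ℝ)*δ) 0
      = sig g δ M * (u - (M:ℝ)*δ) + g ((M:ℝ)*δ) := by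
  induction M with
  | zero =>
    rw [show (0:ℕ)+1 = 1 from rfl, Finset.sum_range_one]
    have h0 : ((0:ℕ):ℝ) * δ = 0 := by norm_num
    rw [h0] at hu ⊢
    rw [sub_zero, max_eq_left hu, hneg 0 le_rfl, add_zero]
    rfl
  | succ M ih =>
    have hM : (M:ℝ)*δ ≤ u := le_trans (by push_cast; nlinarith) hu
    rw [Finset.sum_range_succ, ih hM]
    have hpos : max (u - ((M+1:ℕ):ℝ)*δ) 0 = u - ((M:ℝ)+1)*δ := by
      push_cast
      rw [max_eq_left]
      push_cast at hu
      linarith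
    show sig g δ M * (u - (M:ℝ)*δ) + g ((M:ℝ)*δ) + br g δ (M+1) * max (u - ((M+1:ℕ):ℝ)*δ) 0 = _
    rw [hpos]
    show _ = sig g δ (M+1) * (u - ((M+1:ℕ):ℝ)*δ) + g (((M+1:ℕ):ℝ)*δ)
    have hsig : sig g δ M * δ = g (((M:ℝ)+1)*δ) - g ((M:ℝ)*δ) := by
      rw [sig, div_mul_cancel₀ _ hδ.ne']
    have hbr : br g δ (M+1) = sig g δ (M+1) - sig g δ M := rfl
    push_cast
    push_cast at hsig
    nlinarith [hsig]

include hg hmono hneg hδ in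
lemma claimA (N : ℕ) (v : ℝ) :
    ∑ j ∈ Finset.range N, br g δ j * max (v - (j:ℝ)*δ) 0 ≤ g (v + δ) := by
  have hg0 : g 0 = 0 := hneg 0 le_rfl
  have gnn : ∀ u, 0 ≤ g u := by
    intro u
    rcases le_total u 0 with h | h
    · rw [hneg u h]
    · rw [← hg0]; exact hmono h
  rcases lt_or_ge v 0 with hv | hv
  · have : ∀ j ∈ Finset.range N, br g δ j * max (v - (j:ℝ)*δ) 0 = 0 := by
      intro j _
      have : v - (j:ℝ)*δ < 0 := by
        have : (0:ℝ) ≤ (j:ℝ)*δ := by positivity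
        linarith
      rw [max_eq_right this.le, mul_zero]
    rw [Finset.sum_eq_zero this]
    exact gnn _
  · set k := Nat.floor (v/δ) with hk
    have hk1 : (k:ℝ)*δ ≤ v := by
      rw [← le_div_iff₀ hδ]
      exact Nat.floor_le (div_nonneg hv hδ.le)
    have hk2 : v < ((k:ℝ)+1)*δ := by
      rw [← div_lt_iff₀ hδ]
      exact Nat.lt_floor_add_one _
    have hsplit : ∑ j ∈ Finset.range N, br g δ j * max (v - (j:ℝ)*δ) 0
        = ∑ j ∈ Finset.range (min N (k+1)), br g δ j * max (v - (j:ℝ)*δ) 0 := by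
      refine (Finset.sum_subset (Finset.range_subset_range.mpr (min_le_left _ _)) ?_).symm
      intro j hjN hjM
      simp only [Finset.mem_range] at hjN hjM
      have hjk : k + 1 ≤ j := by omega
      have : v - (j:ℝ)*δ < 0 := by
        have h1 : ((k:ℝ)+1)*δ ≤ (j:ℝ)*δ := by
          have : ((k:ℝ)+1) ≤ (j:ℝ) := by exact_mod_cast hjk
          nlinarith
        linarith
      rw [max_eq_right this.le, mul_zero]
    rw [hsplit]
    rcases Nat.eq_zero_or_pos (min N (k+1)) with hM | hM
    · rw [hM]; simp [gnn _]
    · obtain ⟨M, hMeq⟩ := Nat.exists_eq_succ_of_ne_zero hM.ne'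
      rw [hMeq]
      have hMk : M ≤ k := by omega
      have hMv : (M:ℝ)*δ ≤ v := by
        refine le_trans ?_ hk1
        have : (M:ℝ) ≤ (k:ℝ) := by exact_mod_cast hMk
        nlinarith
      rw [CF hneg hδ M v hMv]
      rcases lt_or_ge v (((M:ℝ)+1)*δ) with hcase | hcase
      · have h1 : sig g δ M * (v - (M:ℝ)*δ) ≤ sig g δ M * δ := by
          apply mul_le_mul_of_nonneg_left _ (sig_nonneg hmono hδ M)
          linarith
        have h2 : sig g δ M * δ = g (((M:ℝ)+1)*δ) - g ((M:ℝ)*δ) := by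
          rw [sig, div_mul_cancel₀ _ hδ.ne']
        have h3 : g (((M:ℝ)+1)*δ) ≤ g (v + δ) := hmono (by linarith)
        linarith
      · have hne1 : ((M:ℝ)+1)*δ ≠ (M:ℝ)*δ := by nlinarith
        have hne2 : v ≠ (M:ℝ)*δ := by nlinarith
        have hsec := hg.secant_mono (a := (M:ℝ)*δ) (x := ((M:ℝ)+1)*δ) (y := v)
          (Set.mem_univ _) (Set.mem_univ _) (Set.mem_univ _) hne1 hne2 hcase
        have he : ((M:ℝ)+1)*δ - (M:ℝ)*δ = δ := by ring
        rw [he] at hsec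
        have hvpos : 0 < v - (M:ℝ)*δ := by nlinarith
        have h1 : sig g δ M * (v - (M:ℝ)*δ) ≤ g v - g ((M:ℝ)*δ) := by
          have h := mul_le_mul_of_nonneg_right hsec hvpos.le
          rwa [div_mul_cancel₀ _ hvpos.ne'] at h
        have h2 : g v ≤ g (v + δ) := hmono (by linarith)
        linarith

include hg hmono hneg hδ in
lemma claimB (v : ℝ) : ∃ N : ℕ,
    g (v - δ) ≤ ∑ j ∈ Finset.range N, br g δ j * max (v - (j:ℝ)*δ) 0 := by
  rcases lt_or_ge v 0 with hv | hv
  · exact ⟨0, by simp [hneg (v - δ) (by linarith)]⟩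
  · set k := Nat.floor (v/δ) with hk
    have hk1 : (k:ℝ)*δ ≤ v := by
      rw [← le_div_iff₀ hδ]
      exact Nat.floor_le (div_nonneg hv hδ.le)
    have hk2 : v < ((k:ℝ)+1)*δ := by
      rw [← div_lt_iff₀ hδ]
      exact Nat.lt_floor_add_one _
    refine ⟨k+1, ?_⟩
    rw [CF hneg hδ k v hk1]
    have h1 : 0 ≤ sig g δ k * (v - (k:ℝ)*δ) :=
      mul_nonneg (sig_nonneg hmono hδ k) (by linarith)
    have h2 : g (v - δ) ≤ g ((k:ℝ)*δ) := hmono (by linarith)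
    linarith

end hyps

/-- brick sum cost function at scale `δ`. -/
noncomputable def Kd (g : ℝ → ℝ) (δ : ℝ) (u : ℝ) : ℝ≥0∞ :=
  ∑' j : ℕ, ENNReal.ofReal (br g δ j) * ENNReal.ofReal (u - ((j:ℝ)+1)*δ)

lemma ofReal_max0 (x : ℝ) : ENNReal.ofReal (max x 0) = ENNReal.ofReal x := by
  rcases le_total x 0 with h | h
  · rw [max_eq_right h, ENNReal.ofReal_of_nonpos h, ENNReal.ofReal_zero]
  · rw [max_eq_left h]

section hyps2
variable {g : ℝ → ℝ} {δ : ℝ}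
variable (hg : ConvexOn ℝ Set.univ g) (hmono : Monotone g) (hneg : ∀ u ≤ 0, g u = 0)
  (hδ : 0 < δ)

include hg hmono hneg hδ in
lemma Kd_le (u : ℝ) : Kd g δ u ≤ ENNReal.ofReal (g u) := by
  rw [Kd, ENNReal.tsum_eq_iSup_sum]
  refine iSup_le fun F => ?_
  obtain ⟨N, hN⟩ := F.exists_nat_subset_range
  calc ∑ j ∈ F, ENNReal.ofReal (br g δ j) * ENNReal.ofReal (u - ((j:ℝ)+1)*δ)
      ≤ ∑ j ∈ Finset.range N, ENNReal.ofReal (br g δ j) * ENNReal.ofReal (u - ((j:ℝ)+1)*δ) :=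
        Finset.sum_le_sum_of_subset_of_nonneg hN (fun _ _ _ => zero_le)
    _ = ENNReal.ofReal (∑ j ∈ Finset.range N, br g δ j * max (u - δ - (j:ℝ)*δ) 0) := by
        rw [ENNReal.ofReal_sum_of_nonneg
          (fun j _ => mul_nonneg (br_nonneg hg hmono hδ j) (le_max_right _ _))]
        refine Finset.sum_congr rfl fun j _ => ?_
        rw [ENNReal.ofReal_mul (br_nonneg hg hmono hδ j), ofReal_max0]
        congr 2
        ring
    _ ≤ ENNReal.ofReal (g u) := by
        apply ENNReal.ofReal_le_ofReal
        have hA := claimA hg hmono hneg hδ N (u - δ)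
        have he : u - δ + δ = u := by ring
        rwa [he] at hA

include hg hmono hneg hδ in
lemma Kd_ge (u : ℝ) : ENNReal.ofReal (g (u - 2*δ)) ≤ Kd g δ u := by
  obtain ⟨N, hN⟩ := claimB hg hmono hneg hδ (u - δ)
  have he : u - δ - δ = u - 2*δ := by ring
  rw [he] at hN
  calc ENNReal.ofReal (g (u - 2*δ))
      ≤ ENNReal.ofReal (∑ j ∈ Finset.range N, br g δ j * max (u - δ - (j:ℝ)*δ) 0) :=
        ENNReal.ofReal_le_ofReal hN
    _ = ∑ j ∈ Finset.range N, ENNReal.ofReal (br g δ j) * ENNReal.ofReal (u - ((j:ℝ)+1)*δ) := by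
        rw [ENNReal.ofReal_sum_of_nonneg
          (fun j _ => mul_nonneg (br_nonneg hg hmono hδ j) (le_max_right _ _))]
        refine Finset.sum_congr rfl fun j _ => ?_
        rw [ENNReal.ofReal_mul (br_nonneg hg hmono hδ j), ofReal_max0]
        congr 2
        ring
    _ ≤ Kd g δ u := ENNReal.sum_le_tsum _

end hyps2

section hyps3
variable {g : ℝ → ℝ}
variable (hg : ConvexOn ℝ Set.univ g) (hmono : Monotone g) (hneg : ∀ u ≤ 0, g u = 0)
  (hcont : Continuous g)

include hg hmono hneg hcont in
lemma Kd_tendsto (u : ℝ) :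
    Tendsto (fun n : ℕ => Kd g (1/((n:ℝ)+1)) u) atTop (𝓝 (ENNReal.ofReal (g u))) := by
  have hδn : ∀ n : ℕ, (0:ℝ) < 1/((n:ℝ)+1) := fun n => by positivity
  refine tendsto_of_tendsto_of_tendsto_of_le_of_le
    (g := fun n : ℕ => ENNReal.ofReal (g (u - 2*(1/((n:ℝ)+1)))))
    (h := fun _ : ℕ => ENNReal.ofReal (g u)) ?_ tendsto_const_nhds
    (fun n => Kd_ge hg hmono hneg (hδn n) u) (fun n => Kd_le hg hmono hneg (hδn n) u)
  have h1 : Tendsto (fun n : ℕ => u - 2*(1/((n:ℝ)+1))) atTop (𝓝 u) := by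
    have h2 : Tendsto (fun n : ℕ => 1/((n:ℝ)+1)) atTop (𝓝 0) :=
      tendsto_one_div_add_atTop_nhds_zero_nat
    have h3 := tendsto_const_nhds (x := u) (f := atTop (α := ℕ)) |>.sub (h2.const_mul 2)
    simpa [mul_comm] using h3
  exact ((ENNReal.continuous_ofReal.tendsto (g u)).comp ((hcont.tendsto u).comp h1))

end hyps3

/-- The comonotone (monotone quantile) coupling of two measures on ℝ. -/
noncomputable def Tmon (m n : Measure ℝ) : Measure (ℝ × ℝ) :=
  (volume.restrict (Icc (0:ℝ) 1)).map (fun s => (qf m s, qf n s))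

instance : IsProbabilityMeasure (volume.restrict (Icc (0:ℝ) 1)) := ⟨by simp [Real.volume_Icc]⟩

section tmon
variable (m n : Measure ℝ) [IsProbabilityMeasure m] [IsProbabilityMeasure n]

lemma aemeasurable_qf_pair :
    AEMeasurable (fun s => (qf m s, qf n s)) (volume.restrict (Icc (0:ℝ) 1)) :=
  (aemeasurable_qf m).prodMk (aemeasurable_qf n)

instance : IsProbabilityMeasure (Tmon m n) := Measure.isProbabilityMeasure_map (aemeasurable_qf_pair m n)

lemma Tmon_fst : (Tmon m n).map Prod.fst = m := by
  rw [Tmon, AEMeasurable.map_map_of_aemeasurable measurable_fst.aemeasurable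
    (aemeasurable_qf_pair m n)]
  exact map_qf m

lemma Tmon_snd : (Tmon m n).map Prod.snd = n := by
  rw [Tmon, AEMeasurable.map_map_of_aemeasurable measurable_snd.aemeasurable
    (aemeasurable_qf_pair m n)]
  exact map_qf n

lemma meas_joint (r y : ℝ) : MeasurableSet {p : ℝ × ℝ | p.1 ≤ r ∧ p.2 ≤ y} :=
  (measurable_fst measurableSet_Iic).inter (measurable_snd measurableSet_Iic)

lemma meas_cross (r y : ℝ) : MeasurableSet {p : ℝ × ℝ | r < p.1 ∧ p.2 ≤ y} :=
  (measurable_fst measurableSet_Ioi).inter (measurable_snd measurableSet_Iic)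

lemma ofReal_min (a b : ℝ) : ENNReal.ofReal (min a b) = min (ENNReal.ofReal a) (ENNReal.ofReal b) := by
  rcases le_total a b with h | h
  · rw [min_eq_left h, min_eq_left (ENNReal.ofReal_le_ofReal h)]
  · rw [min_eq_right h, min_eq_right (ENNReal.ofReal_le_ofReal h)]

lemma Tmon_joint (r y : ℝ) :
    Tmon m n {p : ℝ × ℝ | p.1 ≤ r ∧ p.2 ≤ y} = min (m (Iic r)) (n (Iic y)) := by
  rw [Tmon, Measure.map_apply_of_aemeasurable (aemeasurable_qf_pair m n) (meas_joint r y),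
    Measure.restrict_apply' measurableSet_Icc]
  have hc0 : 0 ≤ min (cdf m r) (cdf n y) := le_min (cdf_nonneg m r) (cdf_nonneg n y)
  have hc1 : min (cdf m r) (cdf n y) ≤ 1 := le_trans (min_le_left _ _) (cdf_le_one m r)
  rw [vol_inter_Icc_eq _ hc0 hc1 (fun s hs => by
    simp only [mem_preimage, mem_setOf_eq, le_min_iff]
    rw [qf_le_iff m hs.1 hs.2, qf_le_iff n hs.1 hs.2])]
  rw [ofReal_min, ofReal_cdf m r, ofReal_cdf n y]

variable {ρ : Measure (ℝ × ℝ)}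

lemma coupling_prob (hρ1 : ρ.map Prod.fst = m) : IsProbabilityMeasure ρ := by
  constructor
  have h := congrArg (fun μ : Measure ℝ => μ univ) hρ1
  rw [Measure.map_apply measurable_fst MeasurableSet.univ] at h
  simpa using h

lemma joint_le (hρ1 : ρ.map Prod.fst = m) (hρ2 : ρ.map Prod.snd = n) (r y : ℝ) :
    ρ {p : ℝ × ℝ | p.1 ≤ r ∧ p.2 ≤ y} ≤ min (m (Iic r)) (n (Iic y)) := by
  refine le_min ?_ ?_
  · rw [← hρ1, Measure.map_apply measurable_fst measurableSet_Iic]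
    exact measure_mono fun p hp => hp.1
  · rw [← hρ2, Measure.map_apply measurable_snd measurableSet_Iic]
    exact measure_mono fun p hp => hp.2

lemma cross_ge (hρ1 : ρ.map Prod.fst = m) (hρ2 : ρ.map Prod.snd = n) (r y : ℝ) :
    Tmon m n {p : ℝ × ℝ | r < p.1 ∧ p.2 ≤ y} ≤ ρ {p : ℝ × ℝ | r < p.1 ∧ p.2 ≤ y} := by
  haveI : IsProbabilityMeasure ρ := coupling_prob m hρ1
  have split : ∀ (θ : Measure (ℝ × ℝ)), θ.map Prod.snd = n →
      θ {p : ℝ × ℝ | p.1 ≤ r ∧ p.2 ≤ y} + θ {p : ℝ × ℝ | r < p.1 ∧ p.2 ≤ y} = n (Iic y) := by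
    intro θ hθ
    rw [← measure_union ?_ (meas_cross r y)]
    · rw [← hθ, Measure.map_apply measurable_snd measurableSet_Iic]
      congr 1
      ext p
      simp only [mem_union, mem_setOf_eq, mem_preimage, mem_Iic]
      constructor
      · rintro (⟨_, hp⟩ | ⟨_, hp⟩) <;> exact hp
      · intro hp
        rcases le_or_gt p.1 r with hh | hh
        · exact Or.inl ⟨hh, hp⟩
        · exact Or.inr ⟨hh, hp⟩
    · refine Set.disjoint_left.mpr fun p hp1 hp2 => ?_
      exact absurd hp2.1 (not_lt.mpr hp1.1)
  have h1 := split (Tmon m n) (Tmon_snd m n)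
  have h2 := split ρ hρ2
  have hle : ρ {p : ℝ × ℝ | p.1 ≤ r ∧ p.2 ≤ y} ≤ Tmon m n {p : ℝ × ℝ | p.1 ≤ r ∧ p.2 ≤ y} := by
    rw [Tmon_joint m n r y]
    exact joint_le m n hρ1 hρ2 r y
  have hfin : ρ {p : ℝ × ℝ | p.1 ≤ r ∧ p.2 ≤ y} ≠ ∞ := measure_ne_top _ _
  rw [← ENNReal.add_le_add_iff_right hfin]
  calc Tmon m n {p : ℝ × ℝ | r < p.1 ∧ p.2 ≤ y} + ρ {p : ℝ × ℝ | p.1 ≤ r ∧ p.2 ≤ y}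
      ≤ Tmon m n {p : ℝ × ℝ | r < p.1 ∧ p.2 ≤ y} + Tmon m n {p : ℝ × ℝ | p.1 ≤ r ∧ p.2 ≤ y} :=
        add_le_add le_rfl hle
    _ = n (Iic y) := by rw [add_comm]; exact h1
    _ = ρ {p : ℝ × ℝ | p.1 ≤ r ∧ p.2 ≤ y} + ρ {p : ℝ × ℝ | r < p.1 ∧ p.2 ≤ y} := h2.symm
    _ = ρ {p : ℝ × ℝ | r < p.1 ∧ p.2 ≤ y} + ρ {p : ℝ × ℝ | p.1 ≤ r ∧ p.2 ≤ y} := add_comm _ _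

lemma brick_cmp (hρ1 : ρ.map Prod.fst = m) (hρ2 : ρ.map Prod.snd = n) (s : ℝ) :
    ∫⁻ p : ℝ × ℝ, ENNReal.ofReal (p.1 - p.2 - s) ∂(Tmon m n)
      ≤ ∫⁻ p : ℝ × ℝ, ENNReal.ofReal (p.1 - p.2 - s) ∂ρ := by
  haveI : IsProbabilityMeasure ρ := coupling_prob m hρ1
  have hE : MeasurableSet {q : (ℝ × ℝ) × ℝ | q.2 < q.1.1 ∧ q.1.2 ≤ q.2 - s} := by
    refine MeasurableSet.inter ?_ ?_
    · exact measurableSet_lt measurable_snd (measurable_fst.comp measurable_fst)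
    · exact measurableSet_le (measurable_snd.comp measurable_fst) (measurable_snd.sub_const s)
  have layer : ∀ (θ : Measure (ℝ × ℝ)), IsProbabilityMeasure θ →
      ∫⁻ p : ℝ × ℝ, ENNReal.ofReal (p.1 - p.2 - s) ∂θ
        = ∫⁻ r, θ {p : ℝ × ℝ | r < p.1 ∧ p.2 ≤ r - s} ∂volume := by
    intro θ hθ
    calc ∫⁻ p : ℝ × ℝ, ENNReal.ofReal (p.1 - p.2 - s) ∂θ
        = ∫⁻ p : ℝ × ℝ, ∫⁻ r, ({q : (ℝ × ℝ) × ℝ | q.2 < q.1.1 ∧ q.1.2 ≤ q.2 - s}).indicator 1 (p, r) ∂volume ∂θ := by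
          refine lintegral_congr fun p => ?_
          have hfun : (fun r => ({q : (ℝ × ℝ) × ℝ | q.2 < q.1.1 ∧ q.1.2 ≤ q.2 - s}).indicator
              (1 : (ℝ × ℝ) × ℝ → ℝ≥0∞) (p, r)) = (Ico (p.2 + s) p.1).indicator 1 := by
            funext r
            simp only [Set.indicator_apply, mem_setOf_eq, mem_Ico]
            congr 1
            simp only [eq_iff_iff]
            constructor
            · rintro ⟨h1, h2⟩; exact ⟨by linarith, h1⟩
            · rintro ⟨h1, h2⟩; exact ⟨h2, by linarith⟩
          rw [hfun, lintegral_indicator_one measurableSet_Ico, Real.volume_Ico]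
          congr 1
          ring
      _ = ∫⁻ r, ∫⁻ p : ℝ × ℝ, ({q : (ℝ × ℝ) × ℝ | q.2 < q.1.1 ∧ q.1.2 ≤ q.2 - s}).indicator 1 (p, r) ∂θ ∂volume :=
          lintegral_lintegral_swap ((measurable_one.indicator hE).aemeasurable)
      _ = ∫⁻ r, θ {p : ℝ × ℝ | r < p.1 ∧ p.2 ≤ r - s} ∂volume := by
          refine lintegral_congr fun r => ?_
          have hfun : (fun p : ℝ × ℝ => ({q : (ℝ × ℝ) × ℝ | q.2 < q.1.1 ∧ q.1.2 ≤ q.2 - s}).indicator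
              (1 : (ℝ × ℝ) × ℝ → ℝ≥0∞) (p, r)) = ({p : ℝ × ℝ | r < p.1 ∧ p.2 ≤ r - s}).indicator 1 := by
            funext p
            simp only [Set.indicator_apply, mem_setOf_eq, Pi.one_apply]
          rw [hfun, lintegral_indicator_one (meas_cross r (r - s))]
  rw [layer (Tmon m n) inferInstance, layer ρ inferInstance]
  exact lintegral_mono fun r => cross_ge m n hρ1 hρ2 r (r - s)

lemma key_one_sided {g : ℝ → ℝ} (hg : ConvexOn ℝ Set.univ g) (hmono : Monotone g)
    (hneg : ∀ u ≤ 0, g u = 0) (hcont : Continuous g)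
    (hρ1 : ρ.map Prod.fst = m) (hρ2 : ρ.map Prod.snd = n) :
    ∫⁻ p : ℝ × ℝ, ENNReal.ofReal (g (p.1 - p.2)) ∂(Tmon m n)
      ≤ ∫⁻ p : ℝ × ℝ, ENNReal.ofReal (g (p.1 - p.2)) ∂ρ := by
  have hδn : ∀ nn : ℕ, (0:ℝ) < 1/((nn:ℝ)+1) := fun nn => by positivity
  have hKmeas : ∀ nn : ℕ, Measurable (fun p : ℝ × ℝ => Kd g (1/((nn:ℝ)+1)) (p.1 - p.2)) := by
    intro nn
    apply Measurable.ennreal_tsum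
    intro j
    exact (((measurable_fst.sub measurable_snd).sub_const _).ennreal_ofReal).const_mul _
  have hcmp : ∀ nn : ℕ, ∫⁻ p : ℝ × ℝ, Kd g (1/((nn:ℝ)+1)) (p.1 - p.2) ∂(Tmon m n)
      ≤ ∫⁻ p : ℝ × ℝ, Kd g (1/((nn:ℝ)+1)) (p.1 - p.2) ∂ρ := by
    intro nn
    have hterm : ∀ (θ : Measure (ℝ × ℝ)), ∫⁻ p : ℝ × ℝ, Kd g (1/((nn:ℝ)+1)) (p.1 - p.2) ∂θ
        = ∑' j : ℕ, ENNReal.ofReal (br g (1/((nn:ℝ)+1)) j)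
            * ∫⁻ p : ℝ × ℝ, ENNReal.ofReal (p.1 - p.2 - ((j:ℝ)+1)*(1/((nn:ℝ)+1))) ∂θ := by
      intro θ
      rw [show (fun p : ℝ × ℝ => Kd g (1/((nn:ℝ)+1)) (p.1 - p.2))
        = fun p : ℝ × ℝ => ∑' j : ℕ, ENNReal.ofReal (br g (1/((nn:ℝ)+1)) j)
            * ENNReal.ofReal (p.1 - p.2 - ((j:ℝ)+1)*(1/((nn:ℝ)+1))) from rfl]
      rw [lintegral_tsum (f := fun (j : ℕ) (p : ℝ × ℝ) => ENNReal.ofReal (br g (1/((nn:ℝ)+1)) j)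
              * ENNReal.ofReal (p.1 - p.2 - ((j:ℝ)+1)*(1/((nn:ℝ)+1)))) fun j =>
        ((((measurable_fst.sub measurable_snd).sub_const _).ennreal_ofReal).const_mul _).aemeasurable]
      exact tsum_congr fun j => lintegral_const_mul _
        (((measurable_fst.sub measurable_snd).sub_const _).ennreal_ofReal)
    rw [hterm (Tmon m n), hterm ρ]
    exact ENNReal.tsum_le_tsum fun j => mul_le_mul_of_nonneg_left (brick_cmp m n hρ1 hρ2 _) (by positivity)
  calc ∫⁻ p : ℝ × ℝ, ENNReal.ofReal (g (p.1 - p.2)) ∂(Tmon m n)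
      = ∫⁻ p : ℝ × ℝ, liminf (fun nn : ℕ => Kd g (1/((nn:ℝ)+1)) (p.1 - p.2)) atTop ∂(Tmon m n) :=
        lintegral_congr fun p => ((Kd_tendsto hg hmono hneg hcont (p.1 - p.2)).liminf_eq).symm
    _ ≤ liminf (fun nn : ℕ => ∫⁻ p : ℝ × ℝ, Kd g (1/((nn:ℝ)+1)) (p.1 - p.2) ∂(Tmon m n)) atTop :=
        lintegral_liminf_le hKmeas
    _ ≤ liminf (fun nn : ℕ => ∫⁻ p : ℝ × ℝ, Kd g (1/((nn:ℝ)+1)) (p.1 - p.2) ∂ρ) atTop :=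
        liminf_le_liminf (Eventually.of_forall hcmp)
    _ ≤ liminf (fun _ : ℕ => ∫⁻ p : ℝ × ℝ, ENNReal.ofReal (g (p.1 - p.2)) ∂ρ) atTop :=
        liminf_le_liminf (Eventually.of_forall fun nn =>
          lintegral_mono fun p => Kd_le hg hmono hneg (hδn nn) _)
    _ = ∫⁻ p : ℝ × ℝ, ENNReal.ofReal (g (p.1 - p.2)) ∂ρ := liminf_const _

end tmon
end
section mainlemmas

lemma h_cont {h : ℝ → ℝ} (hconv : StrictConvexOn ℝ Set.univ h) : Continuous h := by
  exact continuousOn_univ.mp (ConvexOn.continuousOn isOpen_univ hconv.convexOn)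

lemma h_monoOn {h : ℝ → ℝ} (hconv : StrictConvexOn ℝ Set.univ h) (hpos : ∀ t, 0 ≤ h t)
    (h0 : h 0 = 0) : MonotoneOn h (Ici 0) := by
  rintro a (ha : (0:ℝ) ≤ a) b (hb : (0:ℝ) ≤ b) hab
  rcases eq_or_lt_of_le hb with hb0 | hb0
  · have : a = b := le_antisymm hab (by linarith)
    rw [this]
  · set t := a / b with ht
    have ht0 : 0 ≤ t := div_nonneg ha hb0.le
    have ht1 : t ≤ 1 := (div_le_one hb0).mpr hab
    have hco := hconv.convexOn.2 (Set.mem_univ (0:ℝ)) (Set.mem_univ b)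
      (show (0:ℝ) ≤ 1 - t by linarith) (show (0:ℝ) ≤ t from ht0)
      (show (1 - t) + t = 1 by ring)
    have heq : (1 - t) • (0:ℝ) + t • b = a := by
      simp only [smul_eq_mul, mul_zero, zero_add]
      rw [ht, div_mul_cancel₀ _ hb0.ne']
    rw [heq] at hco
    calc h a ≤ (1 - t) * h 0 + t * h b := hco
      _ = t * h b := by rw [h0, mul_zero, zero_add]
      _ ≤ 1 * h b := mul_le_mul_of_nonneg_right ht1 (hpos b)
      _ = h b := one_mul _

/-- the nondecreasing half `t ↦ h(t⁺)` of the cost. -/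
noncomputable def gp (h : ℝ → ℝ) : ℝ → ℝ := fun t => h (max t 0)

lemma gp_conv {h : ℝ → ℝ} (hconv : StrictConvexOn ℝ Set.univ h) (hpos : ∀ t, 0 ≤ h t)
    (h0 : h 0 = 0) : ConvexOn ℝ Set.univ (gp h) := by
  refine ⟨convex_univ, fun x _ y _ a b ha hb hab => ?_⟩
  have h1 : max (a • x + b • y) 0 ≤ a • max x 0 + b • max y 0 := by
    simp only [smul_eq_mul]
    refine max_le ?_ ?_
    · exact add_le_add (mul_le_mul_of_nonneg_left (le_max_left _ _) ha)
        (mul_le_mul_of_nonneg_left (le_max_left _ _) hb)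
    · positivity
  have h2 : (0:ℝ) ≤ a • max x 0 + b • max y 0 := by simp only [smul_eq_mul]; positivity
  calc gp h (a • x + b • y) = h (max (a • x + b • y) 0) := rfl
    _ ≤ h (a • max x 0 + b • max y 0) :=
        h_monoOn hconv hpos h0 (mem_Ici.mpr (le_max_right _ _)) (mem_Ici.mpr h2) h1
    _ ≤ a * h (max x 0) + b * h (max y 0) :=
        hconv.convexOn.2 (Set.mem_univ _) (Set.mem_univ _) ha hb hab

lemma gp_mono {h : ℝ → ℝ} (hconv : StrictConvexOn ℝ Set.univ h) (hpos : ∀ t, 0 ≤ h t)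
    (h0 : h 0 = 0) : Monotone (gp h) := fun a b hab =>
  h_monoOn hconv hpos h0 (mem_Ici.mpr (le_max_right _ _)) (mem_Ici.mpr (le_max_right _ _))
    (max_le_max hab le_rfl)

lemma gp_neg {h : ℝ → ℝ} (h0 : h 0 = 0) : ∀ u ≤ 0, gp h u = 0 := by
  intro u hu
  show h (max u 0) = 0
  rw [max_eq_right hu, h0]

lemma cost_split {h : ℝ → ℝ} (h0 : h 0 = 0) (hpos : ∀ t, 0 ≤ h t) (x y : ℝ) :
    ENNReal.ofReal (h |x - y|) = ENNReal.ofReal (gp h (x - y)) + ENNReal.ofReal (gp h (y - x)) := by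
  rcases le_total y x with hc | hc
  · have e1 : |x - y| = x - y := abs_of_nonneg (by linarith)
    have e2 : gp h (x - y) = h (x - y) := by show h (max _ 0) = _; rw [max_eq_left (by linarith)]
    have e3 : gp h (y - x) = 0 := gp_neg h0 _ (by linarith)
    rw [e1, e2, e3, ENNReal.ofReal_zero, add_zero]
  · have e1 : |x - y| = y - x := by rw [abs_of_nonpos (show x - y ≤ 0 by linarith), neg_sub]
    have e2 : gp h (y - x) = h (y - x) := by show h (max _ 0) = _; rw [max_eq_left (by linarith)]
    have e3 : gp h (x - y) = 0 := gp_neg h0 _ (by linarith)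
    rw [e1, e2, e3, ENNReal.ofReal_zero, zero_add]

lemma mono_opt (m n : Measure ℝ) [IsProbabilityMeasure m] [IsProbabilityMeasure n]
    {h : ℝ → ℝ} (hconv : StrictConvexOn ℝ Set.univ h) (hpos : ∀ t, 0 ≤ h t) (h0 : h 0 = 0)
    {ρ : Measure (ℝ × ℝ)} (hρ1 : ρ.map Prod.fst = m) (hρ2 : ρ.map Prod.snd = n) :
    ∫⁻ p : ℝ × ℝ, ENNReal.ofReal (h |p.1 - p.2|) ∂(Tmon m n)
      ≤ ∫⁻ p : ℝ × ℝ, ENNReal.ofReal (h |p.1 - p.2|) ∂ρ := by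
  have hcont := h_cont hconv
  have hgc := gp_conv hconv hpos h0
  have hgm := gp_mono hconv hpos h0
  have hgn := gp_neg (h := h) h0
  have hgco : Continuous (gp h) := hcont.comp (continuous_id.max continuous_const)
  have hmeas1 : Measurable (fun p : ℝ × ℝ => ENNReal.ofReal (gp h (p.1 - p.2))) :=
    ((hgco.comp (continuous_fst.sub continuous_snd)).measurable).ennreal_ofReal
  have hsplit : ∀ θ : Measure (ℝ × ℝ), ∫⁻ p : ℝ × ℝ, ENNReal.ofReal (h |p.1 - p.2|) ∂θ
      = ∫⁻ p : ℝ × ℝ, ENNReal.ofReal (gp h (p.1 - p.2)) ∂θ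
        + ∫⁻ p : ℝ × ℝ, ENNReal.ofReal (gp h (p.2 - p.1)) ∂θ := by
    intro θ
    rw [← lintegral_add_left hmeas1]
    exact lintegral_congr fun p => cost_split h0 hpos p.1 p.2
  rw [hsplit, hsplit]
  have t1 := key_one_sided m n hgc hgm hgn hgco hρ1 hρ2
  have hswapT : (Tmon m n).map Prod.swap = Tmon n m := by
    rw [Tmon, AEMeasurable.map_map_of_aemeasurable measurable_swap.aemeasurable
      (aemeasurable_qf_pair m n)]
    rfl
  have hswρ1 : (ρ.map Prod.swap).map Prod.fst = n := by
    rw [Measure.map_map measurable_fst measurable_swap]; exact hρ2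
  have hswρ2 : (ρ.map Prod.swap).map Prod.snd = m := by
    rw [Measure.map_map measurable_snd measurable_swap]; exact hρ1
  have t2' := key_one_sided n m hgc hgm hgn hgco hswρ1 hswρ2
  have e1 : ∫⁻ p : ℝ × ℝ, ENNReal.ofReal (gp h (p.1 - p.2)) ∂(Tmon n m)
      = ∫⁻ p : ℝ × ℝ, ENNReal.ofReal (gp h (p.2 - p.1)) ∂(Tmon m n) := by
    rw [← hswapT, lintegral_map hmeas1 measurable_swap]
    rfl
  have e2 : ∫⁻ p : ℝ × ℝ, ENNReal.ofReal (gp h (p.1 - p.2)) ∂(ρ.map Prod.swap)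
      = ∫⁻ p : ℝ × ℝ, ENNReal.ofReal (gp h (p.2 - p.1)) ∂ρ :=
    lintegral_map hmeas1 measurable_swap
  rw [← e1, ← e2]
  exact add_le_add t1 t2'

lemma prob_of_map_fst {α β : Type*} [MeasurableSpace α] [MeasurableSpace β]
    {θ : Measure (α × β)} {m : Measure α} [IsProbabilityMeasure m]
    (hm : θ.map Prod.fst = m) : IsProbabilityMeasure θ := by
  constructor
  have hh := congrArg (fun μ' : Measure α => μ' Set.univ) hm
  rw [Measure.map_apply measurable_fst MeasurableSet.univ] at hh
  simpa using hh

lemma ae_zero_of_map_dirac {β : Type*} [MeasurableSpace β] {θ : Measure β} {f : β → ℝ}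
    (hf : Measurable f) (hd : θ.map f = Measure.dirac 0) : ∀ᵐ q ∂θ, f q = 0 := by
  have h0 : θ (f ⁻¹' ({(0:ℝ)}ᶜ)) = 0 := by
    have hthis := Measure.map_apply (μ := θ) hf (s := {(0:ℝ)}ᶜ) (measurableSet_singleton (0:ℝ)).compl
    rw [hd, Measure.dirac_apply' _ (measurableSet_singleton (0:ℝ)).compl] at hthis
    rw [← hthis]
    simp
  refine ae_iff.mpr ?_
  have hset : {a | ¬ f a = 0} = f ⁻¹' ({(0:ℝ)}ᶜ) := by ext q; simp
  rw [hset]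
  exact h0

lemma map_eq_dirac {β : Type*} [MeasurableSpace β] {θ : Measure β} [IsProbabilityMeasure θ]
    {f : β → ℝ} (hae : ∀ᵐ q ∂θ, f q = 0) : θ.map f = Measure.dirac 0 := by
  rw [Measure.map_congr (g := fun _ => (0:ℝ)) hae, Measure.map_const, measure_univ, one_smul]

lemma compProd_comap_snd_map {α β γ' : Type*} [MeasurableSpace α] [MeasurableSpace β]
    [MeasurableSpace γ'] (ρ : Measure (α × β)) [IsProbabilityMeasure ρ] (κ : Kernel β γ')
    [IsMarkovKernel κ] :
    ((ρ ⊗ₘ (κ.comap Prod.snd measurable_snd)).map (fun q : (α × β) × γ' => (q.1.2, q.2)))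
      = (ρ.map Prod.snd) ⊗ₘ κ := by
  haveI : IsProbabilityMeasure (ρ.map (Prod.snd : α × β → β)) :=
    Measure.isProbabilityMeasure_map measurable_snd.aemeasurable
  ext s hs
  have hmeas : Measurable (fun q : (α × β) × γ' => (q.1.2, q.2)) :=
    (measurable_snd.comp measurable_fst).prodMk measurable_snd
  rw [Measure.map_apply hmeas hs, Measure.compProd_apply (hmeas hs), Measure.compProd_apply hs,
    lintegral_map (Kernel.measurable_kernel_prodMk_left hs) measurable_snd]
  refine lintegral_congr fun p => ?_
  rw [Kernel.comap_apply]
  rfl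

end mainlemmas

lemma Wc_le_cost {A B : Type*} [MeasurableSpace A] [MeasurableSpace B]
    (c : A → B → ℝ≥0∞) (m : Measure A) (n : Measure B) (π : Measure (A × B))
    (hπ : IsCoupling π m n) : Wc c m n ≤ ∫⁻ p, c p.1 p.2 ∂π :=
  iInf₂_le π hπ

lemma Wc_ge {A B : Type*} [MeasurableSpace A] [MeasurableSpace B]
    (c : A → B → ℝ≥0∞) (m : Measure A) (n : Measure B) (bd : ℝ≥0∞)
    (hb : ∀ π : Measure (A × B), IsCoupling π m n → bd ≤ ∫⁻ p, c p.1 p.2 ∂π) :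
    bd ≤ Wc c m n :=
  le_iInf₂ hb

theorem stmt17 (μ ν : Measure (ℝ × ℝ)) [IsProbabilityMeasure μ] [IsProbabilityMeasure ν]
    (h : ℝ → ℝ) (hconv : StrictConvexOn ℝ Set.univ h) (hpos : ∀ t, 0 ≤ h t) (h0 : h 0 = 0)
    (hμ : μ {p : ℝ × ℝ | p.2 = 0} = 1)
    -- conditional law of the second coordinate of ν given the first:
    (κν : Kernel ℝ ℝ) [IsMarkovKernel κν]
    (hκν : ν = (ν.map Prod.fst) ⊗ₘ κν) :
    letI c₁ : ℝ → ℝ → ℝ≥0∞ := fun a b => ENNReal.ofReal (h |a - b|)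
    letI f1 : Measure ((ℝ × ℝ) × ℝ) :=
      ((volume.restrict (Set.Icc (0 : ℝ) 1)).map
          (fun s => (qf (μ.map Prod.fst) s, qf (ν.map Prod.fst) s))).map
        (fun p : ℝ × ℝ => ((p.1, (0 : ℝ)), p.2))
    letI f2 : Measure (ℝ × (ℝ × ℝ)) :=
      ((ν.map Prod.fst) ⊗ₘ κν).map (fun p : ℝ × ℝ => ((0 : ℝ), p))
    -- (f1, f2) is the optimal cardinal flow
    ((f1, f2) ∈ Flows μ ν ∧ CT c₁ c₁ (f1, f2) = ⨅ G ∈ Flows μ ν, CT c₁ c₁ G) ∧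
    -- and the Wasserstein cost decomposes
    Wc (fun x y : ℝ × ℝ => c₁ x.1 y.1 + c₁ x.2 y.2) μ ν
      = Wc c₁ (μ.map Prod.fst) (ν.map Prod.fst)
        + ∫⁻ y₁, Wc c₁ (Measure.dirac (0 : ℝ)) (κν y₁) ∂(ν.map Prod.fst) := by
  set c₁ : ℝ → ℝ → ℝ≥0∞ := fun a b => ENNReal.ofReal (h |a - b|) with hc₁def
  set f1 : Measure ((ℝ × ℝ) × ℝ) :=
    ((volume.restrict (Set.Icc (0 : ℝ) 1)).map
        (fun s => (qf (μ.map Prod.fst) s, qf (ν.map Prod.fst) s))).map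
      (fun p : ℝ × ℝ => ((p.1, (0 : ℝ)), p.2)) with hf1def
  set f2 : Measure (ℝ × (ℝ × ℝ)) :=
    ((ν.map Prod.fst) ⊗ₘ κν).map (fun p : ℝ × ℝ => ((0 : ℝ), p)) with hf2def
  have hcont := h_cont hconv
  have hc : Measurable (fun p : ℝ × ℝ => ENNReal.ofReal (h |p.1 - p.2|)) :=
    ((hcont.comp (continuous_fst.sub continuous_snd).abs).measurable).ennreal_ofReal
  haveI hm₁i : IsProbabilityMeasure (μ.map Prod.fst) :=
    Measure.isProbabilityMeasure_map measurable_fst.aemeasurable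
  haveI hn₁i : IsProbabilityMeasure (ν.map Prod.fst) :=
    Measure.isProbabilityMeasure_map measurable_fst.aemeasurable
  have hφ : Measurable (fun p : ℝ × ℝ => ((p.1, (0:ℝ)), p.2)) :=
    (measurable_fst.prodMk measurable_const).prodMk measurable_snd
  have hψ : Measurable (fun p : ℝ × ℝ => ((0:ℝ), p)) := measurable_const.prodMk measurable_id
  have hemb : Measurable (fun x : ℝ => (x, (0:ℝ))) := measurable_id.prodMk measurable_const
  have hms : MeasurableSet {p : ℝ × ℝ | p.2 = 0} := measurable_snd (measurableSet_singleton (0:ℝ))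
  have hμae : ∀ᵐ p ∂μ, p.2 = 0 := by
    refine ae_iff.mpr ?_
    have he : {p : ℝ × ℝ | ¬ p.2 = 0} = {p : ℝ × ℝ | p.2 = 0}ᶜ := rfl
    rw [he, measure_compl hms (measure_ne_top _ _), hμ, measure_univ, tsub_self]
  have hμsnd : μ.map Prod.snd = Measure.dirac 0 := map_eq_dirac hμae
  have hμdec : (μ.map Prod.fst).map (fun x : ℝ => (x, (0:ℝ))) = μ := by
    rw [Measure.map_map hemb measurable_fst]
    have h1 : μ.map ((fun x : ℝ => (x, (0:ℝ))) ∘ Prod.fst) = μ.map id := by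
      apply Measure.map_congr
      filter_upwards [hμae] with p hp
      show (p.1, (0:ℝ)) = p
      exact Prod.ext_iff.mpr ⟨rfl, hp.symm⟩
    rw [h1, Measure.map_id]
  -- Flows membership
  have hf1fst : f1.map Prod.fst = μ := by
    show ((Tmon (μ.map Prod.fst) (ν.map Prod.fst)).map
      (fun p : ℝ × ℝ => ((p.1, (0:ℝ)), p.2))).map Prod.fst = μ
    rw [Measure.map_map measurable_fst hφ]
    have he : (Prod.fst ∘ (fun p : ℝ × ℝ => ((p.1, (0:ℝ)), p.2)))
        = ((fun x : ℝ => (x, (0:ℝ))) ∘ Prod.fst) := rfl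
    rw [he, ← Measure.map_map hemb measurable_fst, Tmon_fst]
    exact hμdec
  have hf2eq : f2 = ν.map (fun p : ℝ × ℝ => ((0:ℝ), p)) := by
    show ((ν.map Prod.fst) ⊗ₘ κν).map _ = _
    rw [← hκν]
  have hf2snd : f2.map Prod.snd = ν := by
    rw [hf2eq, Measure.map_map measurable_snd hψ]
    have he : (Prod.snd ∘ (fun p : ℝ × ℝ => ((0:ℝ), p))) = id := rfl
    rw [he, Measure.map_id]
  have hψ₁m : Measurable (fun p : (ℝ × ℝ) × ℝ => (p.2, p.1.2)) :=
    measurable_snd.prodMk (measurable_snd.comp measurable_fst)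
  have hψ₂m : Measurable (fun p : ℝ × (ℝ × ℝ) => (p.2.1, p.1)) :=
    (measurable_fst.comp measurable_snd).prodMk measurable_fst
  have hglue : f1.map (fun p : (ℝ × ℝ) × ℝ => (p.2, p.1.2))
      = f2.map (fun p : ℝ × (ℝ × ℝ) => (p.2.1, p.1)) := by
    show ((Tmon (μ.map Prod.fst) (ν.map Prod.fst)).map
      (fun p : ℝ × ℝ => ((p.1, (0:ℝ)), p.2))).map _ = _
    rw [hf2eq, Measure.map_map hψ₁m hφ, Measure.map_map hψ₂m hψ]
    have e1 : ((fun p : (ℝ × ℝ) × ℝ => (p.2, p.1.2)) ∘ (fun p : ℝ × ℝ => ((p.1, (0:ℝ)), p.2)))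
        = ((fun y : ℝ => (y, (0:ℝ))) ∘ Prod.snd) := rfl
    have e2 : ((fun p : ℝ × (ℝ × ℝ) => (p.2.1, p.1)) ∘ (fun p : ℝ × ℝ => ((0:ℝ), p)))
        = ((fun y : ℝ => (y, (0:ℝ))) ∘ Prod.fst) := rfl
    rw [e1, e2, ← Measure.map_map hemb measurable_snd, ← Measure.map_map hemb measurable_fst,
      Tmon_snd]
  have hf1prob : IsProbabilityMeasure f1 := by
    show IsProbabilityMeasure ((Tmon (μ.map Prod.fst) (ν.map Prod.fst)).map _)
    exact Measure.isProbabilityMeasure_map hφ.aemeasurable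
  have hf2prob : IsProbabilityMeasure f2 := by
    rw [hf2eq]
    exact Measure.isProbabilityMeasure_map hψ.aemeasurable
  have hmem : (f1, f2) ∈ Flows μ ν := ⟨hf1prob, hf2prob, hf1fst, hf2snd, hglue⟩
  -- cost of the optimal flow
  have hc1 : Measurable (fun q : (ℝ × ℝ) × ℝ => ENNReal.ofReal (h |q.1.1 - q.2|)) :=
    ((hcont.comp ((continuous_fst.comp continuous_fst).sub continuous_snd).abs).measurable).ennreal_ofReal
  have hc2 : Measurable (fun q : ℝ × (ℝ × ℝ) => ENNReal.ofReal (h |q.1 - q.2.2|)) :=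
    ((hcont.comp (continuous_fst.sub (continuous_snd.comp continuous_snd)).abs).measurable).ennreal_ofReal
  have hν0meas : Measurable (fun p : ℝ × ℝ => ENNReal.ofReal (h |(0:ℝ) - p.2|)) :=
    ((hcont.comp (continuous_const.sub continuous_snd).abs).measurable).ennreal_ofReal
  have hCT1 : ∫⁻ q, c₁ q.1.1 q.2 ∂f1
      = ∫⁻ p : ℝ × ℝ, ENNReal.ofReal (h |p.1 - p.2|)
          ∂(Tmon (μ.map Prod.fst) (ν.map Prod.fst)) :=
    lintegral_map hc1 hφ
  have hCT2 : ∫⁻ q, c₁ q.1 q.2.2 ∂f2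
      = ∫⁻ p : ℝ × ℝ, ENNReal.ofReal (h |(0:ℝ) - p.2|) ∂ν := by
    rw [hf2eq]
    exact lintegral_map hc2 hψ
  have hOPT : CT c₁ c₁ (f1, f2)
      = (∫⁻ p : ℝ × ℝ, ENNReal.ofReal (h |p.1 - p.2|)
          ∂(Tmon (μ.map Prod.fst) (ν.map Prod.fst)))
        + ∫⁻ p : ℝ × ℝ, ENNReal.ofReal (h |(0:ℝ) - p.2|) ∂ν := by
    show (∫⁻ q, c₁ q.1.1 q.2 ∂f1) + (∫⁻ q, c₁ q.1 q.2.2 ∂f2) = _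
    rw [hCT1, hCT2]
  -- lower bound for all flows
  have hFlowLB : ∀ G ∈ Flows μ ν,
      (∫⁻ p : ℝ × ℝ, ENNReal.ofReal (h |p.1 - p.2|)
          ∂(Tmon (μ.map Prod.fst) (ν.map Prod.fst)))
        + (∫⁻ p : ℝ × ℝ, ENNReal.ofReal (h |(0:ℝ) - p.2|) ∂ν) ≤ CT c₁ c₁ G := by
    rintro ⟨G1, G2⟩ ⟨hG1p, hG2p, hGa, hGb, hGc⟩
    haveI := hG1p
    haveI := hG2p
    have hproj : Measurable (fun q : (ℝ × ℝ) × ℝ => (q.1.1, q.2)) :=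
      (measurable_fst.comp measurable_fst).prodMk measurable_snd
    have hρ1 : (G1.map (fun q : (ℝ × ℝ) × ℝ => (q.1.1, q.2))).map Prod.fst = μ.map Prod.fst := by
      rw [Measure.map_map measurable_fst hproj, ← hGa,
        Measure.map_map measurable_fst measurable_fst]
      rfl
    have hmapped := congrArg (Measure.map (Prod.fst : ℝ × ℝ → ℝ)) hGc
    rw [Measure.map_map measurable_fst hψ₁m, Measure.map_map measurable_fst hψ₂m] at hmapped
    have hρ2 : (G1.map (fun q : (ℝ × ℝ) × ℝ => (q.1.1, q.2))).map Prod.snd = ν.map Prod.fst := by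
      rw [Measure.map_map measurable_snd hproj]
      calc G1.map (Prod.snd ∘ fun q : (ℝ × ℝ) × ℝ => (q.1.1, q.2))
          = G2.map (Prod.fst ∘ (fun p : ℝ × (ℝ × ℝ) => (p.2.1, p.1))) := hmapped
        _ = (G2.map Prod.snd).map Prod.fst :=
            (Measure.map_map measurable_fst measurable_snd).symm
        _ = ν.map Prod.fst := by rw [hGb]
    have hT1 : (∫⁻ p : ℝ × ℝ, ENNReal.ofReal (h |p.1 - p.2|)
        ∂(Tmon (μ.map Prod.fst) (ν.map Prod.fst))) ≤ ∫⁻ q, c₁ q.1.1 q.2 ∂G1 := by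
      refine le_trans (mono_opt _ _ hconv hpos h0 hρ1 hρ2) (le_of_eq ?_)
      exact lintegral_map hc hproj
    have hmapped2 := congrArg (Measure.map (Prod.snd : ℝ × ℝ → ℝ)) hGc
    rw [Measure.map_map measurable_snd hψ₁m, Measure.map_map measurable_snd hψ₂m] at hmapped2
    have hL : G1.map (Prod.snd ∘ fun p : (ℝ × ℝ) × ℝ => (p.2, p.1.2)) = Measure.dirac 0 := by
      have he : G1.map (Prod.snd ∘ fun p : (ℝ × ℝ) × ℝ => (p.2, p.1.2))
          = (G1.map Prod.fst).map Prod.snd :=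
        (Measure.map_map measurable_snd measurable_fst).symm
      rw [he, hGa, hμsnd]
    have hG2fst : G2.map Prod.fst = Measure.dirac 0 := hmapped2.symm.trans hL
    have hG2ae : ∀ᵐ q ∂G2, q.1 = 0 := ae_zero_of_map_dirac measurable_fst hG2fst
    have hT2 : (∫⁻ p : ℝ × ℝ, ENNReal.ofReal (h |(0:ℝ) - p.2|) ∂ν)
        = ∫⁻ q, c₁ q.1 q.2.2 ∂G2 := by
      rw [← hGb]
      rw [lintegral_map hν0meas measurable_snd]
      refine lintegral_congr_ae ?_
      filter_upwards [hG2ae] with q hq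
      show ENNReal.ofReal (h |(0:ℝ) - q.2.2|) = ENNReal.ofReal (h |q.1 - q.2.2|)
      rw [hq]
    exact add_le_add hT1 (le_of_eq hT2)
  have hG2goal : CT c₁ c₁ (f1, f2) = ⨅ G ∈ Flows μ ν, CT c₁ c₁ G := by
    refine le_antisymm (le_iInf₂ fun G hG => ?_) (iInf₂_le _ hmem)
    rw [hOPT]
    exact hFlowLB G hG
  refine ⟨⟨hmem, hG2goal⟩, ?_⟩
  -- Wasserstein decomposition
  have hmeas0 : Measurable (fun y : ℝ => ENNReal.ofReal (h |(0:ℝ) - y|)) :=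
    ((hcont.comp (continuous_const.sub continuous_id).abs).measurable).ennreal_ofReal
  have hWdirac : ∀ y₁ : ℝ, Wc c₁ (Measure.dirac (0:ℝ)) (κν y₁)
      = ∫⁻ y₂, ENNReal.ofReal (h |(0:ℝ) - y₂|) ∂(κν y₁) := by
    intro y₁
    refine le_antisymm ?_ ?_
    · have hcoup : IsCoupling ((Measure.dirac (0:ℝ)).prod (κν y₁)) (Measure.dirac 0) (κν y₁) := by
        constructor
        · rw [Measure.map_fst_prod]
          simp
        · rw [Measure.map_snd_prod]
          simp
      refine le_trans (Wc_le_cost _ _ _ _ hcoup) (le_of_eq ?_)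
      have he : ∫⁻ p : ℝ × ℝ, ENNReal.ofReal (h |p.1 - p.2|)
          ∂((Measure.dirac (0:ℝ)).prod (κν y₁))
          = ∫⁻ x, ∫⁻ y, ENNReal.ofReal (h |x - y|) ∂(κν y₁) ∂(Measure.dirac (0:ℝ)) :=
        lintegral_prod _ hc.aemeasurable
      refine he.trans ?_
      exact lintegral_dirac _ _
    · refine Wc_ge _ _ _ _ fun π hπ => ?_
      haveI : IsProbabilityMeasure π := prob_of_map_fst hπ.1
      have hae := ae_zero_of_map_dirac measurable_fst hπ.1
      have he : ∫⁻ p, c₁ p.1 p.2 ∂π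
          = ∫⁻ p : ℝ × ℝ, ENNReal.ofReal (h |(0:ℝ) - p.2|) ∂π := by
        refine lintegral_congr_ae ?_
        filter_upwards [hae] with p hp
        show ENNReal.ofReal (h |p.1 - p.2|) = ENNReal.ofReal (h |(0:ℝ) - p.2|)
        rw [hp]
      rw [he, ← hπ.2, lintegral_map hmeas0 measurable_snd]
  have hcp : ∫⁻ p : ℝ × ℝ, ENNReal.ofReal (h |(0:ℝ) - p.2|) ∂((ν.map Prod.fst) ⊗ₘ κν)
      = ∫⁻ y₁, ∫⁻ y₂, ENNReal.ofReal (h |(0:ℝ) - y₂|) ∂(κν y₁) ∂(ν.map Prod.fst) :=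
    Measure.lintegral_compProd hν0meas
  have hSint : (∫⁻ y₁, Wc c₁ (Measure.dirac (0:ℝ)) (κν y₁) ∂(ν.map Prod.fst))
      = ∫⁻ p : ℝ × ℝ, ENNReal.ofReal (h |(0:ℝ) - p.2|) ∂ν := by
    rw [lintegral_congr hWdirac, ← hcp, ← hκν]
  have hTcoup : IsCoupling (Tmon (μ.map Prod.fst) (ν.map Prod.fst))
      (μ.map Prod.fst) (ν.map Prod.fst) := ⟨Tmon_fst _ _, Tmon_snd _ _⟩
  have hW1 : Wc c₁ (μ.map Prod.fst) (ν.map Prod.fst)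
      = ∫⁻ p : ℝ × ℝ, ENNReal.ofReal (h |p.1 - p.2|)
          ∂(Tmon (μ.map Prod.fst) (ν.map Prod.fst)) := by
    refine le_antisymm (Wc_le_cost _ _ _ _ hTcoup) (Wc_ge _ _ _ _ fun ρ hρ => ?_)
    exact mono_opt _ _ hconv hpos h0 hρ.1 hρ.2
  rw [hSint, hW1]
  refine le_antisymm ?_ ?_
  · -- upper bound via the glued coupling
    haveI : IsMarkovKernel (κν.comap (Prod.snd : ℝ × ℝ → ℝ) measurable_snd : Kernel (ℝ × ℝ) ℝ) :=
      ⟨fun a => by rw [Kernel.comap_apply]; infer_instance⟩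
    have hΦ : Measurable (fun q : (ℝ × ℝ) × ℝ => ((q.1.1, (0:ℝ)), (q.1.2, q.2))) :=
      ((measurable_fst.comp measurable_fst).prodMk measurable_const).prodMk
        ((measurable_snd.comp measurable_fst).prodMk measurable_snd)
    have hγfst : (((Tmon (μ.map Prod.fst) (ν.map Prod.fst))
        ⊗ₘ (κν.comap (Prod.snd : ℝ × ℝ → ℝ) measurable_snd)).map
        (fun q : (ℝ × ℝ) × ℝ => ((q.1.1, (0:ℝ)), (q.1.2, q.2)))).map Prod.fst = μ := by
      rw [Measure.map_map measurable_fst hΦ]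
      have he : (Prod.fst ∘ fun q : (ℝ × ℝ) × ℝ => ((q.1.1, (0:ℝ)), (q.1.2, q.2)))
          = ((fun p : ℝ × ℝ => (p.1, (0:ℝ))) ∘ Prod.fst) := rfl
      rw [he, ← Measure.map_map (measurable_fst.prodMk measurable_const) measurable_fst]
      have hbase : ((Tmon (μ.map Prod.fst) (ν.map Prod.fst))
          ⊗ₘ (κν.comap (Prod.snd : ℝ × ℝ → ℝ) measurable_snd)).map Prod.fst
          = Tmon (μ.map Prod.fst) (ν.map Prod.fst) := by
        have e : ((Tmon (μ.map Prod.fst) (ν.map Prod.fst))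
            ⊗ₘ (κν.comap (Prod.snd : ℝ × ℝ → ℝ) measurable_snd)).map Prod.fst
            = ((Tmon (μ.map Prod.fst) (ν.map Prod.fst))
              ⊗ₘ (κν.comap (Prod.snd : ℝ × ℝ → ℝ) measurable_snd)).fst := rfl
        rw [e, Measure.fst_compProd]
      rw [hbase]
      have he2 : (fun p : ℝ × ℝ => (p.1, (0:ℝ))) = ((fun x : ℝ => (x, (0:ℝ))) ∘ Prod.fst) := rfl
      rw [he2, ← Measure.map_map hemb measurable_fst, Tmon_fst]
      exact hμdec
    have hγsnd : (((Tmon (μ.map Prod.fst) (ν.map Prod.fst))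
        ⊗ₘ (κν.comap (Prod.snd : ℝ × ℝ → ℝ) measurable_snd)).map
        (fun q : (ℝ × ℝ) × ℝ => ((q.1.1, (0:ℝ)), (q.1.2, q.2)))).map Prod.snd = ν := by
      rw [Measure.map_map measurable_snd hΦ]
      have hL := compProd_comap_snd_map (Tmon (μ.map Prod.fst) (ν.map Prod.fst)) κν
      rw [Tmon_snd] at hL
      have he : (Prod.snd ∘ fun q : (ℝ × ℝ) × ℝ => ((q.1.1, (0:ℝ)), (q.1.2, q.2)))
          = (fun q : (ℝ × ℝ) × ℝ => (q.1.2, q.2)) := rfl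
      rw [he, hL, ← hκν]
    refine le_trans (Wc_le_cost _ _ _ _ (⟨hγfst, hγsnd⟩ : IsCoupling _ μ ν)) (le_of_eq ?_)
    have hq2meas : Measurable (fun q : (ℝ × ℝ) × ℝ =>
        ENNReal.ofReal (h |q.1.1 - q.1.2|) + ENNReal.ofReal (h |(0:ℝ) - q.2|)) := by
      refine Measurable.add (f := fun q : (ℝ × ℝ) × ℝ => ENNReal.ofReal (h |q.1.1 - q.1.2|))
        (g := fun q : (ℝ × ℝ) × ℝ => ENNReal.ofReal (h |(0:ℝ) - q.2|)) ?_ ?_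
      · exact ((hcont.comp ((continuous_fst.comp continuous_fst).sub
          (continuous_snd.comp continuous_fst)).abs).measurable).ennreal_ofReal
      · exact ((hcont.comp (continuous_const.sub continuous_snd).abs).measurable).ennreal_ofReal
    have hCq : Measurable (fun p : (ℝ × ℝ) × (ℝ × ℝ) =>
        ENNReal.ofReal (h |p.1.1 - p.2.1|) + ENNReal.ofReal (h |p.1.2 - p.2.2|)) := by
      refine Measurable.add (f := fun p : (ℝ × ℝ) × (ℝ × ℝ) => ENNReal.ofReal (h |p.1.1 - p.2.1|))
        (g := fun p : (ℝ × ℝ) × (ℝ × ℝ) => ENNReal.ofReal (h |p.1.2 - p.2.2|)) ?_ ?_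
      · exact ((hcont.comp ((continuous_fst.comp continuous_fst).sub
          (continuous_fst.comp continuous_snd)).abs).measurable).ennreal_ofReal
      · exact ((hcont.comp ((continuous_snd.comp continuous_fst).sub
          (continuous_snd.comp continuous_snd)).abs).measurable).ennreal_ofReal
    have hF : Measurable (fun y₁ : ℝ => ∫⁻ y₂, ENNReal.ofReal (h |(0:ℝ) - y₂|) ∂(κν y₁)) :=
      Measurable.lintegral_kernel (by fun_prop)
    calc ∫⁻ p, (fun x y : ℝ × ℝ => c₁ x.1 y.1 + c₁ x.2 y.2) p.1 p.2
          ∂(((Tmon (μ.map Prod.fst) (ν.map Prod.fst))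
            ⊗ₘ (κν.comap (Prod.snd : ℝ × ℝ → ℝ) measurable_snd)).map
            (fun q : (ℝ × ℝ) × ℝ => ((q.1.1, (0:ℝ)), (q.1.2, q.2))))
        = ∫⁻ q : (ℝ × ℝ) × ℝ,
            (ENNReal.ofReal (h |q.1.1 - q.1.2|) + ENNReal.ofReal (h |(0:ℝ) - q.2|))
            ∂((Tmon (μ.map Prod.fst) (ν.map Prod.fst))
              ⊗ₘ (κν.comap (Prod.snd : ℝ × ℝ → ℝ) measurable_snd)) := lintegral_map hCq hΦ
      _ = ∫⁻ p : ℝ × ℝ, ∫⁻ y₂,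
            (ENNReal.ofReal (h |p.1 - p.2|) + ENNReal.ofReal (h |(0:ℝ) - y₂|))
            ∂(κν p.2) ∂(Tmon (μ.map Prod.fst) (ν.map Prod.fst)) := by
          have := Measure.lintegral_compProd (μ := Tmon (μ.map Prod.fst) (ν.map Prod.fst))
            (κ := κν.comap (Prod.snd : ℝ × ℝ → ℝ) measurable_snd) hq2meas
          refine this.trans (lintegral_congr fun p => ?_)
          rw [Kernel.comap_apply]
      _ = ∫⁻ p : ℝ × ℝ, (ENNReal.ofReal (h |p.1 - p.2|)
            + ∫⁻ y₂, ENNReal.ofReal (h |(0:ℝ) - y₂|) ∂(κν p.2))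
            ∂(Tmon (μ.map Prod.fst) (ν.map Prod.fst)) := by
          refine lintegral_congr fun p => ?_
          rw [lintegral_add_left measurable_const, lintegral_const, measure_univ, mul_one]
      _ = (∫⁻ p : ℝ × ℝ, ENNReal.ofReal (h |p.1 - p.2|)
            ∂(Tmon (μ.map Prod.fst) (ν.map Prod.fst)))
          + ∫⁻ p : ℝ × ℝ, (∫⁻ y₂, ENNReal.ofReal (h |(0:ℝ) - y₂|) ∂(κν p.2))
            ∂(Tmon (μ.map Prod.fst) (ν.map Prod.fst)) := lintegral_add_left hc _
      _ = (∫⁻ p : ℝ × ℝ, ENNReal.ofReal (h |p.1 - p.2|)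
            ∂(Tmon (μ.map Prod.fst) (ν.map Prod.fst)))
          + ∫⁻ p : ℝ × ℝ, ENNReal.ofReal (h |(0:ℝ) - p.2|) ∂ν := by
          congr 1
          calc ∫⁻ p : ℝ × ℝ, (∫⁻ y₂, ENNReal.ofReal (h |(0:ℝ) - y₂|) ∂(κν p.2))
                ∂(Tmon (μ.map Prod.fst) (ν.map Prod.fst))
              = ∫⁻ y₁, (∫⁻ y₂, ENNReal.ofReal (h |(0:ℝ) - y₂|) ∂(κν y₁))
                ∂((Tmon (μ.map Prod.fst) (ν.map Prod.fst)).map Prod.snd) :=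
                (lintegral_map hF measurable_snd).symm
            _ = ∫⁻ y₁, (∫⁻ y₂, ENNReal.ofReal (h |(0:ℝ) - y₂|) ∂(κν y₁)) ∂(ν.map Prod.fst) := by
                rw [Tmon_snd]
            _ = ∫⁻ p : ℝ × ℝ, ENNReal.ofReal (h |(0:ℝ) - p.2|) ∂((ν.map Prod.fst) ⊗ₘ κν) :=
                hcp.symm
            _ = ∫⁻ p : ℝ × ℝ, ENNReal.ofReal (h |(0:ℝ) - p.2|) ∂ν := by rw [← hκν]
  · -- lower bound
    refine Wc_ge _ _ _ _ fun π hπ => ?_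
    haveI : IsProbabilityMeasure π := prob_of_map_fst hπ.1
    have hc1' : Measurable (fun p : (ℝ × ℝ) × (ℝ × ℝ) => ENNReal.ofReal (h |p.1.1 - p.2.1|)) :=
      ((hcont.comp ((continuous_fst.comp continuous_fst).sub
        (continuous_fst.comp continuous_snd)).abs).measurable).ennreal_ofReal
    have hsplit : ∫⁻ p, (fun x y : ℝ × ℝ => c₁ x.1 y.1 + c₁ x.2 y.2) p.1 p.2 ∂π
        = (∫⁻ p : (ℝ × ℝ) × (ℝ × ℝ), ENNReal.ofReal (h |p.1.1 - p.2.1|) ∂π)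
          + ∫⁻ p : (ℝ × ℝ) × (ℝ × ℝ), ENNReal.ofReal (h |p.1.2 - p.2.2|) ∂π :=
      lintegral_add_left hc1' _
    rw [hsplit]
    have hproj : Measurable (fun p : (ℝ × ℝ) × (ℝ × ℝ) => (p.1.1, p.2.1)) :=
      (measurable_fst.comp measurable_fst).prodMk (measurable_fst.comp measurable_snd)
    have hρ1 : (π.map (fun p : (ℝ × ℝ) × (ℝ × ℝ) => (p.1.1, p.2.1))).map Prod.fst
        = μ.map Prod.fst := by
      rw [Measure.map_map measurable_fst hproj, ← hπ.1,
        Measure.map_map measurable_fst measurable_fst]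
      rfl
    have hρ2 : (π.map (fun p : (ℝ × ℝ) × (ℝ × ℝ) => (p.1.1, p.2.1))).map Prod.snd
        = ν.map Prod.fst := by
      rw [Measure.map_map measurable_snd hproj, ← hπ.2,
        Measure.map_map measurable_fst measurable_snd]
      rfl
    have hterm1 : (∫⁻ p : ℝ × ℝ, ENNReal.ofReal (h |p.1 - p.2|)
        ∂(Tmon (μ.map Prod.fst) (ν.map Prod.fst)))
        ≤ ∫⁻ p : (ℝ × ℝ) × (ℝ × ℝ), ENNReal.ofReal (h |p.1.1 - p.2.1|) ∂π := by
      refine le_trans (mono_opt _ _ hconv hpos h0 hρ1 hρ2) (le_of_eq ?_)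
      exact lintegral_map hc hproj
    have hπae : ∀ᵐ p ∂π, p.1.2 = 0 := by
      have hm : π.map (fun p : (ℝ × ℝ) × (ℝ × ℝ) => p.1.2) = Measure.dirac 0 := by
        have he : π.map (fun p : (ℝ × ℝ) × (ℝ × ℝ) => p.1.2)
            = (π.map Prod.fst).map Prod.snd :=
          (Measure.map_map measurable_snd measurable_fst).symm
        rw [he, hπ.1, hμsnd]
      exact ae_zero_of_map_dirac (measurable_snd.comp measurable_fst) hm
    have hterm2 : (∫⁻ p : ℝ × ℝ, ENNReal.ofReal (h |(0:ℝ) - p.2|) ∂ν)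
        = ∫⁻ p : (ℝ × ℝ) × (ℝ × ℝ), ENNReal.ofReal (h |p.1.2 - p.2.2|) ∂π := by
      have hmeasν : Measurable (fun y : ℝ × ℝ => ENNReal.ofReal (h |(0:ℝ) - y.2|)) := hν0meas
      rw [← hπ.2, lintegral_map hmeasν measurable_snd]
      refine lintegral_congr_ae ?_
      filter_upwards [hπae] with p hp
      show ENNReal.ofReal (h |(0:ℝ) - p.2.2|) = ENNReal.ofReal (h |p.1.2 - p.2.2|)
      rw [hp]
    exact add_le_add hterm1 (le_of_eq hterm2)
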